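/- If H is a real N×N matrix with N distinct real eigenvalues E₁,…,E_N and corresponding real eigenvectors v₁,…,v_N, then for any positive reals κ₁,…,κ_N the matrix Θ = Σₙ κₙ wₙwₙᵀ, where wₙ are the eigenvectors of Hᵀ (normalized so that wₘᵀvₙ = δ_{mn}), is symmetric positive definite and satisfies HᵀΘ = ΘH. -/

import Mathlib

open scoped Matrix

/-- for H with simple real spectrum, eigenvectors vₙ of H and
biorthonormal eigenvectors wₙ of Hᵀ, and any positive κₙ, the matrix
Θ = Σₙ κₙ wₙwₙᵀ is symmetric positive definite and solves HᵀΘ = ΘH. -/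
theorem stmt_15 {N : ℕ} (H : Matrix (Fin N) (Fin N) ℝ)
    (E : Fin N → ℝ) (hE : Function.Injective E)
    (v w : Fin N → (Fin N → ℝ))
    (hv : ∀ n, H.mulVec (v n) = E n • v n)
    (hw : ∀ n, Hᵀ.mulVec (w n) = E n • w n)
    (hbi : ∀ m n, w m ⬝ᵥ v n = if m = n then 1 else 0)
    (κ : Fin N → ℝ) (hκ : ∀ n, 0 < κ n) :
    (∑ n, κ n • Matrix.vecMulVec (w n) (w n)).IsSymm ∧
      (∑ n, κ n • Matrix.vecMulVec (w n) (w n)).PosDef ∧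
      Hᵀ * (∑ n, κ n • Matrix.vecMulVec (w n) (w n)) =
        (∑ n, κ n • Matrix.vecMulVec (w n) (w n)) * H := by
  have hsym : (∑ n, κ n • Matrix.vecMulVec (w n) (w n)).IsSymm := by
    apply Matrix.IsSymm.ext
    intro i j
    simp only [Matrix.sum_apply, Matrix.smul_apply, Matrix.vecMulVec_apply, smul_eq_mul]
    exact Finset.sum_congr rfl fun n _ => by ring
  -- quadratic form
  have hquad : ∀ x : Fin N → ℝ, x ⬝ᵥ (∑ n, κ n • Matrix.vecMulVec (w n) (w n)).mulVec x
      = ∑ n, κ n * (w n ⬝ᵥ x)^2 := by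
    intro x
    have h1 : ∀ n, (Matrix.vecMulVec (w n) (w n)).mulVec x = (w n ⬝ᵥ x) • w n := by
      intro n
      ext i
      simp only [Matrix.mulVec, dotProduct, Matrix.vecMulVec_apply, Pi.smul_apply,
        smul_eq_mul, Finset.sum_mul]
      exact Finset.sum_congr rfl fun j _ => by ring
    have hsum : (∑ n, κ n • Matrix.vecMulVec (w n) (w n)).mulVec x
        = ∑ n, κ n • ((Matrix.vecMulVec (w n) (w n)).mulVec x) := by
      ext i
      simp only [Matrix.mulVec, dotProduct, Matrix.sum_apply, Matrix.smul_apply,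
        Finset.sum_apply, Pi.smul_apply, smul_eq_mul, Finset.sum_mul, Finset.mul_sum]
      rw [Finset.sum_comm]
      exact Finset.sum_congr rfl fun n _ => Finset.sum_congr rfl fun j _ => by ring
    have hds : x ⬝ᵥ (∑ n, κ n • ((Matrix.vecMulVec (w n) (w n)).mulVec x))
        = ∑ n, x ⬝ᵥ (κ n • ((Matrix.vecMulVec (w n) (w n)).mulVec x)) := by
      simp only [dotProduct, Finset.sum_apply, Finset.mul_sum]
      exact Finset.sum_comm
    rw [hsum, hds]
    refine Finset.sum_congr rfl fun n _ => ?_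
    rw [dotProduct_smul, h1, dotProduct_smul, dotProduct_comm x (w n)]
    simp [pow_two]
  -- W invertible
  have hWker : ∀ x : Fin N → ℝ, (∀ n, w n ⬝ᵥ x = 0) → x = 0 := by
    intro x hx
    set W : Matrix (Fin N) (Fin N) ℝ := Matrix.of fun n i => w n i
    set V : Matrix (Fin N) (Fin N) ℝ := Matrix.of fun i n => v n i
    have hWV : W * V = 1 := by
      ext m n
      simpa [W, V, Matrix.mul_apply, Matrix.one_apply, dotProduct] using hbi m n
    have hVW : V * W = 1 := mul_eq_one_comm.mp hWV
    have hWx : W.mulVec x = 0 := by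
      ext n; simpa [W, Matrix.mulVec, dotProduct] using hx n
    calc x = (V * W).mulVec x := by rw [hVW, Matrix.one_mulVec]
      _ = V.mulVec (W.mulVec x) := by rw [Matrix.mulVec_mulVec]
      _ = 0 := by rw [hWx, Matrix.mulVec_zero]
  refine ⟨hsym, ?_, ?_⟩
  · refine Matrix.posDef_iff_dotProduct_mulVec.mpr ⟨?_, ?_⟩
    · exact Matrix.isHermitian_iff_isSymm.mpr hsym
    · intro x hx
      have hx' : ¬ ∀ n, w n ⬝ᵥ x = 0 := fun h => hx (hWker x h)
      push_neg at hx'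
      obtain ⟨n, hn⟩ := hx'
      have : (0:ℝ) < ∑ m, κ m * (w m ⬝ᵥ x)^2 := by
        refine Finset.sum_pos' (fun m _ => mul_nonneg (hκ m).le (sq_nonneg _)) ⟨n, Finset.mem_univ n, ?_⟩
        exact mul_pos (hκ n) (pow_two_pos_of_ne_zero hn)
      simpa [hquad x] using this
  · have key : ∀ n, Hᵀ * Matrix.vecMulVec (w n) (w n) = Matrix.vecMulVec (w n) (w n) * H := by
      intro n
      ext i j
      have h1 : ∑ k, Hᵀ i k * w n k = E n * w n i := by
        have := congrFun (hw n) i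
        simpa [Matrix.mulVec, dotProduct] using this
      have h2 : ∑ k, w n k * H k j = E n * w n j := by
        have := congrFun (hw n) j
        simp only [Matrix.mulVec, dotProduct, Matrix.transpose_apply, Pi.smul_apply,
          smul_eq_mul] at this
        rw [← this]
        exact Finset.sum_congr rfl fun k _ => by ring
      simp only [Matrix.mul_apply, Matrix.vecMulVec_apply]
      calc ∑ k, Hᵀ i k * (w n k * w n j) = (∑ k, Hᵀ i k * w n k) * w n j := by
            rw [Finset.sum_mul]; exact Finset.sum_congr rfl fun k _ => by ring
        _ = E n * w n i * w n j := by rw [h1]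
        _ = w n i * (E n * w n j) := by ring
        _ = w n i * ∑ k, w n k * H k j := by rw [h2]
        _ = ∑ k, w n i * w n k * H k j := by rw [Finset.mul_sum]; exact Finset.sum_congr rfl fun k _ => by ring
    rw [Finset.mul_sum, Finset.sum_mul]
    refine Finset.sum_congr rfl fun n _ => ?_
    rw [Matrix.mul_smul, Matrix.smul_mul, key n]
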